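/- Let n ≥ 2 and let l, m be nonnegative integers with l + m ≤ 2n − 3. Then Σ_{k=1}^{n−1} (1 − cos²(kπ/n)) · U_l(cos(kπ/n)) · U_m(cos(kπ/n)) = (n/2) if l = m and 0 otherwise. -/

import Mathlib

open Polynomial Finset Real

/-- Sum of `cos (j k π / n)` over `k = 1, …, n-1` vanishes for odd `j`. -/
lemma odd_cos_sum (n j : ℕ) (hj : Odd j) :
    ∑ k ∈ Finset.Icc 1 (n - 1), Real.cos (j * k * Real.pi / n) = 0 := by
  rcases Nat.eq_zero_or_pos n with rfl | hn
  · simp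
  have hn' : (n : ℝ) ≠ 0 := Nat.cast_ne_zero.mpr (by omega)
  refine Finset.sum_involution (fun k _ => n - k) ?_ ?_ ?_ ?_
  · intro k hk
    simp only [Finset.mem_Icc] at hk
    have h1 : ((n - k : ℕ) : ℝ) = (n : ℝ) - k := by
      push_cast [Nat.cast_sub (by omega : k ≤ n)]; ring
    have h2 : (j : ℝ) * ((n : ℝ) - k) * Real.pi / n
        = (j : ℝ) * Real.pi - (j : ℝ) * k * Real.pi / n := by
      field_simp
    rw [h1, h2, Real.cos_nat_mul_pi_sub, Odd.neg_one_pow hj]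
    ring
  · intro k hk hfk
    simp only [Finset.mem_Icc] at hk
    intro hcontra
    replace hcontra : n - k = k := hcontra
    apply hfk
    have hk2 : n = 2 * k := by omega
    obtain ⟨r, hr⟩ := hj
    refine Real.cos_eq_zero_iff.mpr ⟨(r : ℤ), ?_⟩
    subst hr hk2
    have hk0 : (k : ℝ) ≠ 0 := Nat.cast_ne_zero.mpr (by omega)
    push_cast
    field_simp
  · intro k hk
    simp only [Finset.mem_Icc] at hk ⊢
    omega
  · intro k hk
    simp only [Finset.mem_Icc] at hk
    show n - (n - k) = k
    omega

/-- Sum of `cos (j k π / n)` over `k = 1, …, n-1` is `-1` for even `j` with `1 ≤ j ≤ 2n-1`. -/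
lemma even_cos_sum (n j : ℕ) (hn : 1 ≤ n) (hj : Even j) (hj1 : 1 ≤ j) (hj2 : j ≤ 2 * n - 1) :
    ∑ k ∈ Finset.Icc 1 (n - 1), Real.cos (j * k * Real.pi / n) = -1 := by
  have hn' : (n : ℝ) ≠ 0 := Nat.cast_ne_zero.mpr (by omega)
  set θ : ℝ := j * Real.pi / n with hθ
  set z : ℂ := Complex.exp (θ * Complex.I) with hz
  -- z ≠ 1
  have hzre : z.re = Real.cos θ := Complex.exp_ofReal_mul_I_re θ
  have hθpos : 0 < θ := by
    apply div_pos (mul_pos ?_ Real.pi_pos) (by positivity)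
    exact_mod_cast hj1
  have hθlt : θ < 2 * Real.pi := by
    rw [hθ, div_lt_iff₀ (by positivity : (0:ℝ) < n)]
    have : (j : ℝ) < 2 * n := by exact_mod_cast (by omega : j < 2 * n)
    nlinarith [Real.pi_pos]
  have hcos : Real.cos θ ≠ 1 := by
    intro h
    have h0 := (Real.cos_eq_one_iff_of_lt_of_lt (x := θ) (by nlinarith [Real.pi_pos]) hθlt).mp h
    linarith
  have hz1 : z ≠ 1 := fun h => hcos (by rw [← hzre, h]; simp)
  -- z ^ n = 1
  have hzn : z ^ n = 1 := by
    obtain ⟨t, ht⟩ := hj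
    rw [hz, ← Complex.exp_nat_mul]
    have hnC : (n : ℂ) ≠ 0 := Nat.cast_ne_zero.mpr (by omega)
    have : (n : ℂ) * (θ * Complex.I) = (t : ℕ) * (2 * Real.pi * Complex.I) := by
      rw [hθ, ht]
      push_cast
      field_simp [hnC]
      ring
    rw [this, Complex.exp_nat_mul_two_pi_mul_I]
  -- geometric sum
  have hgeom : ∑ k ∈ Finset.range n, z ^ k = 0 := by
    rw [geom_sum_eq hz1, hzn, sub_self, zero_div]
  -- real parts
  have hre : ∀ k : ℕ, Real.cos (j * k * Real.pi / n) = (z ^ k).re := by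
    intro k
    rw [hz, ← Complex.exp_nat_mul]
    have : (k : ℂ) * (θ * Complex.I) = ((j * k * Real.pi / n : ℝ) : ℂ) * Complex.I := by
      rw [hθ]; push_cast; ring
    rw [this, Complex.exp_ofReal_mul_I_re]
  have hsum0 : ∑ k ∈ Finset.range n, Real.cos (j * k * Real.pi / n) = 0 := by
    simp_rw [hre]
    rw [← Complex.re_sum, hgeom, Complex.zero_re]
  -- split off k = 0
  have hsplit : Finset.range n = insert 0 (Finset.Icc 1 (n - 1)) := by
    ext k
    simp only [Finset.mem_range, Finset.mem_insert, Finset.mem_Icc]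
    omega
  rw [hsplit, Finset.sum_insert (by simp)] at hsum0
  have h0 : Real.cos ((j : ℝ) * (0 : ℕ) * Real.pi / n) = 1 := by
    norm_num
  rw [h0] at hsum0
  linarith

lemma stmt9_aux (n : ℕ) (hn : 2 ≤ n) (l m : ℕ) (hlm : l + m ≤ 2 * n - 3) (hle : l ≤ m) :
    ∑ k ∈ Finset.Icc 1 (n - 1),
        (1 - (Real.cos (k * Real.pi / n)) ^ 2)
          * (Polynomial.Chebyshev.U ℝ (l : ℤ)).eval (Real.cos (k * Real.pi / n))
          * (Polynomial.Chebyshev.U ℝ (m : ℤ)).eval (Real.cos (k * Real.pi / n))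
      = if l = m then (n : ℝ) / 2 else 0 := by
  have hn' : (n : ℝ) ≠ 0 := Nat.cast_ne_zero.mpr (by omega)
  have key : ∀ k : ℕ,
      (1 - (Real.cos (k * Real.pi / n)) ^ 2)
          * (Polynomial.Chebyshev.U ℝ (l : ℤ)).eval (Real.cos (k * Real.pi / n))
          * (Polynomial.Chebyshev.U ℝ (m : ℤ)).eval (Real.cos (k * Real.pi / n))
      = (Real.cos (((m - l : ℕ) : ℝ) * k * Real.pi / n)
          - Real.cos (((l + m + 2 : ℕ) : ℝ) * k * Real.pi / n)) / 2 := by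
    intro k
    set θ := (k : ℝ) * Real.pi / n with hθ
    have hL := Polynomial.Chebyshev.U_real_cos θ (l : ℤ)
    have hM := Polynomial.Chebyshev.U_real_cos θ (m : ℤ)
    push_cast at hL hM
    have hsin : Real.sin θ ^ 2 = 1 - Real.cos θ ^ 2 := Real.sin_sq θ
    have expand : (1 - Real.cos θ ^ 2)
          * (Polynomial.Chebyshev.U ℝ (l : ℤ)).eval (Real.cos θ)
          * (Polynomial.Chebyshev.U ℝ (m : ℤ)).eval (Real.cos θ)
        = ((Polynomial.Chebyshev.U ℝ (l : ℤ)).eval (Real.cos θ) * Real.sin θ)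
          * ((Polynomial.Chebyshev.U ℝ (m : ℤ)).eval (Real.cos θ) * Real.sin θ) := by
      rw [← hsin]; ring
    rw [expand, hL, hM]
    have h1 : ((m - l : ℕ) : ℝ) * k * Real.pi / n
        = ((m : ℝ) + 1) * θ - ((l : ℝ) + 1) * θ := by
      rw [hθ, Nat.cast_sub hle]
      field_simp
      ring
    have h2 : ((l + m + 2 : ℕ) : ℝ) * k * Real.pi / n
        = ((m : ℝ) + 1) * θ + ((l : ℝ) + 1) * θ := by
      rw [hθ]
      push_cast
      field_simp
      ring
    rw [h1, h2, Real.cos_sub, Real.cos_add]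
    ring
  simp_rw [key]
  rw [← Finset.sum_div, Finset.sum_sub_distrib]
  have hj2 : (1 : ℕ) ≤ l + m + 2 := by omega
  have hj2' : l + m + 2 ≤ 2 * n - 1 := by omega
  by_cases hlmeq : l = m
  · subst hlmeq
    have hfirst : ∑ k ∈ Finset.Icc 1 (n - 1),
        Real.cos (((l - l : ℕ) : ℝ) * k * Real.pi / n) = (n : ℝ) - 1 := by
      have : ∀ k ∈ Finset.Icc 1 (n - 1),
          Real.cos (((l - l : ℕ) : ℝ) * k * Real.pi / n) = 1 := by
        intro k _
        simp
      rw [Finset.sum_congr rfl this, Finset.sum_const, Nat.card_Icc]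
      have : n - 1 + 1 - 1 = n - 1 := by omega
      rw [this]
      simp only [nsmul_eq_mul, mul_one]
      push_cast [Nat.cast_sub (by omega : 1 ≤ n)]
      ring
    have hsecond : ∑ k ∈ Finset.Icc 1 (n - 1),
        Real.cos (((l + l + 2 : ℕ) : ℝ) * k * Real.pi / n) = -1 :=
      even_cos_sum n (l + l + 2) (by omega) ⟨l + 1, by ring⟩ (by omega) (by omega)
    rw [hfirst, hsecond, if_pos rfl]
    ring
  · have hlt : l < m := lt_of_le_of_ne hle hlmeq
    rcases Nat.even_or_odd (m - l) with he | ho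
    · have he2 : Even (l + m + 2) := by
        rcases he with ⟨t, ht⟩
        exact ⟨l + t + 1, by omega⟩
      rw [even_cos_sum n (m - l) (by omega) he (by omega) (by omega),
        even_cos_sum n (l + m + 2) (by omega) he2 hj2 hj2', if_neg hlmeq]
      ring
    · have ho2 : Odd (l + m + 2) := by
        rcases ho with ⟨t, ht⟩
        exact ⟨l + t + 1, by omega⟩
      rw [odd_cos_sum n (m - l) ho, odd_cos_sum n (l + m + 2) ho2, if_neg hlmeq]
      ring

/-- **discrete orthogonality of Chebyshev polynomials of the second kind.**
For `n ≥ 2` and nonnegative integers `l, m` with `l + m ≤ 2n − 3`,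
`Σ_{k=1}^{n−1} (1 − cos²(kπ/n)) U_l(cos(kπ/n)) U_m(cos(kπ/n))` equals `n/2` if `l = m`
and `0` otherwise. -/
theorem stmt9 (n : ℕ) (hn : 2 ≤ n) (l m : ℕ) (hlm : l + m ≤ 2 * n - 3) :
    ∑ k ∈ Finset.Icc 1 (n - 1),
        (1 - (Real.cos (k * Real.pi / n)) ^ 2)
          * (Polynomial.Chebyshev.U ℝ (l : ℤ)).eval (Real.cos (k * Real.pi / n))
          * (Polynomial.Chebyshev.U ℝ (m : ℤ)).eval (Real.cos (k * Real.pi / n))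
      = if l = m then (n : ℝ) / 2 else 0 := by
  rcases le_total l m with h | h
  · exact stmt9_aux n hn l m hlm h
  · have := stmt9_aux n hn m l (by omega) h
    rw [show (if m = l then (n:ℝ)/2 else 0) = (if l = m then (n:ℝ)/2 else 0) by
      simp [eq_comm]] at this
    rw [← this]
    apply Finset.sum_congr rfl
    intro k _
    ring
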